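/- Let b ∈ ℝ. Set Ã(x) = 1 − (1/4)·b³·x³, B̃(x) = x − (1/2)·b·x², C̃(x) = b + (1/2)·b²·x + (1/2)·b³·x², and define f(x) = −(Ã′(x) − C̃(x))/Ã(x), g(x) = Ã(x)·B̃(x). Then there is a neighborhood of 0 on which g′(x) + f(x)·g(x) = 1 for all x. -/

import Mathlib

/-- Zero-Urabe-function isochronicity identity: with `Ã`, `B̃`, `C̃` as below and the
Liénard data `f(x) = −(Ã′(x) − C̃(x))/Ã(x)`, `g(x) = Ã(x)·B̃(x)`, the identity
`g′(x) + f(x)·g(x) = 1` holds on a neighborhood of `0`. -/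
theorem stmt_12 (b : ℝ) (A B C f g : ℝ → ℝ)
    (hA : ∀ x : ℝ, A x = 1 - (1/4)*b^3*x^3)
    (hB : ∀ x : ℝ, B x = x - (1/2)*b*x^2)
    (hC : ∀ x : ℝ, C x = b + (1/2)*b^2*x + (1/2)*b^3*x^2)
    (hf : ∀ x : ℝ, f x = -(deriv A x - C x) / A x)
    (hg : ∀ x : ℝ, g x = A x * B x) :
    ∃ ε > (0 : ℝ), ∀ x : ℝ, |x| < ε → deriv g x + f x * g x = 1 := by
  have hAfun : A = fun x : ℝ => 1 - (1/4)*b^3*x^3 := funext hA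
  have hgfun : g = fun x : ℝ => (1 - (1/4)*b^3*x^3) * (x - (1/2)*b*x^2) := by
    funext x; rw [hg, hA, hB]
  refine ⟨1/(|b|+1), by positivity, ?_⟩
  intro x hx
  -- derivative of A
  have hA' : ∀ y : ℝ, HasDerivAt (fun x : ℝ => 1 - (1/4)*b^3*x^3) (-((3/4)*b^3*y^2)) y := by
    intro y
    have h := ((hasDerivAt_pow 3 y).const_mul ((1/4)*b^3)).const_sub 1
    simpa using h.congr_deriv (by ring)
  have hB' : ∀ y : ℝ, HasDerivAt (fun x : ℝ => x - (1/2)*b*x^2) (1 - b*y) y := by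
    intro y
    have h := (hasDerivAt_id' y).sub ((hasDerivAt_pow 2 y).const_mul ((1/2)*b))
    exact h.congr_deriv (by ring)
  have hdA : deriv A x = -((3/4)*b^3*x^2) := by
    rw [hAfun]; exact (hA' x).deriv
  have hdg : deriv g x =
      (-((3/4)*b^3*x^2)) * (x - (1/2)*b*x^2) + (1 - (1/4)*b^3*x^3) * (1 - b*x) := by
    rw [hgfun]; exact ((hA' x).mul (hB' x)).deriv
  -- A x ≠ 0
  have hbx : |b*x| < 1 := by
    rw [abs_mul]
    rcases le_or_gt |b| 0 with h | h
    · have : |b| = 0 := le_antisymm h (abs_nonneg b)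
      simp [this]
    · calc |b| * |x| < |b| * (1/(|b|+1)) := by
            exact mul_lt_mul_of_pos_left hx h
        _ = |b|/(|b|+1) := by ring
        _ ≤ 1 := by
            rw [div_le_one (by positivity)]; linarith
  have hAx : (1 : ℝ) - (1/4)*b^3*x^3 ≠ 0 := by
    have h3 : |(b*x)^3| < 1 := by
      rw [abs_pow]
      exact pow_lt_one₀ (abs_nonneg _) hbx (by norm_num)
    intro h0
    have h4 : (b*x)^3 = 4 := by nlinarith [h0]
    rw [h4] at h3
    norm_num at h3
  have hAx0 : A x ≠ 0 := by rw [hA x]; exact hAx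
  have hfg : f x * g x = -(deriv A x - C x) * B x := by
    rw [hf, hg]; field_simp
  rw [hdg, hfg, hdA, hB, hC]
  ring
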